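/- arXiv:1401.0230 — 2 statements merged into one kernel-verified Lean document; each statement's English description precedes it below -/
import Mathlib

section
/- (Fundamental equalities for oscillatory eigenmodes) Assume θ = 0. Let ζ ∈ ℂ and q ∈ ℂ^N with q ≠ 0, C(ζ,β)q = 0, and Re ζ ≠ 0. Then (β/2)·⟨q, Rq⟩/⟨q, αq⟩ = −Im ζ, |ζ|² = ⟨q, ηq⟩/⟨q, αq⟩, and −Im ζ < |ζ| ≤ ω_max. -/
open Matrix
open scoped ComplexOrder

noncomputable section

variable {N : ℕ}

/-- A real matrix viewed as a complex matrix. -/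
def cm (M : Matrix (Fin N) (Fin N) ℝ) : Matrix (Fin N) (Fin N) ℂ :=
  M.map Complex.ofReal

/-- The quadratic matrix pencil `C(ζ,β) = ζ²α + iζ(2θ + βR) − η`. -/
def pencil (α η θ R : Matrix (Fin N) (Fin N) ℝ) (β : ℝ) (ζ : ℂ) :
    Matrix (Fin N) (Fin N) ℂ :=
  ζ ^ 2 • cm α + (Complex.I * ζ) • ((2 : ℂ) • cm θ + (β : ℂ) • cm R) - cm η

/-- `K_p = (√α)⁻¹`. -/
def Kp {α : Matrix (Fin N) (Fin N) ℝ} (hα : (cm α).PosDef) : Matrix (Fin N) (Fin N) ℂ :=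
  ((hα.posSemidef.1.eigenvectorUnitary : Matrix (Fin N) (Fin N) ℂ) *
    diagonal ((↑) ∘ Real.sqrt ∘ hα.posSemidef.1.eigenvalues) *
    (star hα.posSemidef.1.eigenvectorUnitary : Matrix (Fin N) (Fin N) ℂ))⁻¹

/-- `Φ = √η · K_p`. -/
def Phi {α η : Matrix (Fin N) (Fin N) ℝ} (hα : (cm α).PosDef) (hη : (cm η).PosSemidef) :
    Matrix (Fin N) (Fin N) ℂ :=
  ((hη.1.eigenvectorUnitary : Matrix (Fin N) (Fin N) ℂ) *
    diagonal ((↑) ∘ Real.sqrt ∘ hη.1.eigenvalues) *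
    (star hη.1.eigenvectorUnitary : Matrix (Fin N) (Fin N) ℂ)) * Kp hα

/-- `R̃ = K_p R K_p`. -/
def Rt (R : Matrix (Fin N) (Fin N) ℝ) {α : Matrix (Fin N) (Fin N) ℝ} (hα : (cm α).PosDef) :
    Matrix (Fin N) (Fin N) ℂ :=
  Kp hα * cm R * Kp hα

/-- `Ω_p = −2i K_p θ K_p`. -/
def Omp (θ : Matrix (Fin N) (Fin N) ℝ) {α : Matrix (Fin N) (Fin N) ℝ} (hα : (cm α).PosDef) :
    Matrix (Fin N) (Fin N) ℂ :=
  ((-2 : ℂ) * Complex.I) • (Kp hα * cm θ * Kp hα)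

/-- `Ω = [[Ω_p, −iΦᵀ],[iΦ, 0]]`. -/
def Om (θ : Matrix (Fin N) (Fin N) ℝ) {α η : Matrix (Fin N) (Fin N) ℝ}
    (hα : (cm α).PosDef) (hη : (cm η).PosSemidef) :
    Matrix (Fin N ⊕ Fin N) (Fin N ⊕ Fin N) ℂ :=
  fromBlocks (Omp θ hα) ((-Complex.I) • (Phi hα hη)ᵀ) (Complex.I • Phi hα hη) 0

/-- `B = [[R̃, 0],[0, 0]]`. -/
def Bm (R : Matrix (Fin N) (Fin N) ℝ) {α : Matrix (Fin N) (Fin N) ℝ} (hα : (cm α).PosDef) :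
    Matrix (Fin N ⊕ Fin N) (Fin N ⊕ Fin N) ℂ :=
  fromBlocks (Rt R hα) 0 0 0

/-- The system operator `A(β) = Ω − iβB`. -/
def Asys (θ R : Matrix (Fin N) (Fin N) ℝ) {α η : Matrix (Fin N) (Fin N) ℝ}
    (hα : (cm α).PosDef) (hη : (cm η).PosSemidef) (β : ℝ) :
    Matrix (Fin N ⊕ Fin N) (Fin N ⊕ Fin N) ℂ :=
  Om θ hα hη - (Complex.I * (β : ℂ)) • Bm R hα

/-- The ℓ²→ℓ² operator norm of a complex matrix. -/
def opN {n : Type*} [Fintype n] [DecidableEq n] (M : Matrix n n ℂ) : ℝ :=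
  ‖Matrix.toEuclideanCLM (𝕜 := ℂ) M‖

/-- `ω_max = ‖Ω‖`. -/
def omegaMax (θ : Matrix (Fin N) (Fin N) ℝ) {α η : Matrix (Fin N) (Fin N) ℝ}
    (hα : (cm α).PosDef) (hη : (cm η).PosSemidef) : ℝ :=
  opN (Om θ hα hη)

/-- `b_min`, the smallest nonzero eigenvalue of `B`. -/
def bMin (R : Matrix (Fin N) (Fin N) ℝ) {α : Matrix (Fin N) (Fin N) ℝ} (hα : (cm α).PosDef) : ℝ :=
  sInf {r : ℝ | r ≠ 0 ∧ (r : ℂ) ∈ spectrum ℂ (Bm R hα)}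


private lemma normsq_eq' {n : Type*} [Fintype n] (v : n → ℂ) :
    ‖(WithLp.equiv 2 (n → ℂ)).symm v‖ ^ 2 = (star v ⬝ᵥ v).re := by
  rw [EuclideanSpace.norm_eq, Real.sq_sqrt (by positivity)]
  simp [dotProduct, Complex.re_sum, Complex.sq_norm, Complex.normSq_apply]

private lemma sqrtM_props {M : Matrix (Fin N) (Fin N) ℂ} (hM : M.IsHermitian)
    (hnn : ∀ i, 0 ≤ hM.eigenvalues i) :
    ((hM.eigenvectorUnitary : Matrix (Fin N) (Fin N) ℂ) *
      diagonal ((↑) ∘ Real.sqrt ∘ hM.eigenvalues) *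
      (star hM.eigenvectorUnitary : Matrix (Fin N) (Fin N) ℂ))ᴴ =
    ((hM.eigenvectorUnitary : Matrix (Fin N) (Fin N) ℂ) *
      diagonal ((↑) ∘ Real.sqrt ∘ hM.eigenvalues) *
      (star hM.eigenvectorUnitary : Matrix (Fin N) (Fin N) ℂ)) ∧
    ((hM.eigenvectorUnitary : Matrix (Fin N) (Fin N) ℂ) *
      diagonal ((↑) ∘ Real.sqrt ∘ hM.eigenvalues) *
      (star hM.eigenvectorUnitary : Matrix (Fin N) (Fin N) ℂ)) *
    ((hM.eigenvectorUnitary : Matrix (Fin N) (Fin N) ℂ) *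
      diagonal ((↑) ∘ Real.sqrt ∘ hM.eigenvalues) *
      (star hM.eigenvectorUnitary : Matrix (Fin N) (Fin N) ℂ)) = M := by
  have hUU : (star hM.eigenvectorUnitary : Matrix (Fin N) (Fin N) ℂ) *
      (hM.eigenvectorUnitary : Matrix (Fin N) (Fin N) ℂ) = 1 := Unitary.coe_star_mul_self _
  constructor
  · rw [conjTranspose_mul, conjTranspose_mul, diagonal_conjTranspose, ← star_eq_conjTranspose,
      ← star_eq_conjTranspose, star_star, Matrix.mul_assoc]
    have hst : star ((↑) ∘ Real.sqrt ∘ hM.eigenvalues : Fin N → ℂ) =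
        ((↑) ∘ Real.sqrt ∘ hM.eigenvalues : Fin N → ℂ) := by
      funext i
      simp
    rw [hst]
  · have hsp := hM.spectral_theorem
    rw [Unitary.conjStarAlgAut_apply] at hsp
    conv_rhs => rw [hsp]
    have hD : diagonal ((↑) ∘ Real.sqrt ∘ hM.eigenvalues) *
        diagonal ((↑) ∘ Real.sqrt ∘ hM.eigenvalues) =
        diagonal (RCLike.ofReal ∘ hM.eigenvalues : Fin N → ℂ) := by
      rw [diagonal_mul_diagonal]
      congr 1
      funext i
      simp only [Function.comp_apply]
      rw [← Complex.ofReal_mul, Real.mul_self_sqrt (hnn i)]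
      rfl
    rw [← hD]
    simp only [Matrix.mul_assoc]
    rw [← Matrix.mul_assoc (star _) _ _, hUU, Matrix.one_mul]

private lemma star_sum_elim {n m : Type*} (u : n → ℂ) (v : m → ℂ) :
    star (Sum.elim u v) = Sum.elim (star u) (star v) := by
  funext i; cases i <;> simp

set_option maxHeartbeats 1000000 in
/-- **Fundamental equalities for oscillatory eigenmodes** (`θ = 0`). If `C(ζ,β)q = 0`,
`q ≠ 0` and `Re ζ ≠ 0`, then `(β/2)⟨q,Rq⟩/⟨q,αq⟩ = −Im ζ`, `|ζ|² = ⟨q,ηq⟩/⟨q,αq⟩`,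
and `−Im ζ < |ζ| ≤ ω_max`. -/
theorem fundamental_equalities_oscillatory
    {N : ℕ} (hN : 1 ≤ N)
    (α η R : Matrix (Fin N) (Fin N) ℝ)
    (hα : (cm α).PosDef) (hη : (cm η).PosSemidef)
    (hR : (cm R).PosSemidef) (hR0 : R ≠ 0)
    (β : ℝ) (hβ : 0 ≤ β)
    (ζ : ℂ) (hζ : ζ.re ≠ 0) (q : Fin N → ℂ) (hq : q ≠ 0)
    (hmode : pencil α η 0 R β ζ *ᵥ q = 0) :
    β / 2 * ((star q ⬝ᵥ (cm R *ᵥ q)).re / (star q ⬝ᵥ (cm α *ᵥ q)).re) = -ζ.im ∧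
    ‖ζ‖ ^ 2 = (star q ⬝ᵥ (cm η *ᵥ q)).re / (star q ⬝ᵥ (cm α *ᵥ q)).re ∧
    -ζ.im < ‖ζ‖ ∧
    ‖ζ‖ ≤ omegaMax 0 hα hη := by
  classical
  have hcm0 : cm (0 : Matrix (Fin N) (Fin N) ℝ) = 0 := by ext i j; simp [cm]
  -- scalar equation
  have h0 : star q ⬝ᵥ (pencil α η 0 R β ζ *ᵥ q) = 0 := by rw [hmode, dotProduct_zero]
  rw [pencil, hcm0] at h0
  simp only [smul_zero, zero_add, Matrix.add_mulVec, Matrix.sub_mulVec,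
    Matrix.smul_mulVec, dotProduct_add, dotProduct_sub, dotProduct_smul,
    smul_eq_mul] at h0
  have hkeyC : ζ^2 * (star q ⬝ᵥ (cm α *ᵥ q)) + Complex.I * ζ * ((β:ℂ) * (star q ⬝ᵥ (cm R *ᵥ q)))
      - star q ⬝ᵥ (cm η *ᵥ q) = 0 := by linear_combination h0
  -- realness and sign facts
  have hApos := hα.dotProduct_mulVec_pos hq
  rw [Complex.lt_def] at hApos
  have hEnn := hη.dotProduct_mulVec_nonneg q
  rw [Complex.le_def] at hEnn
  have hRnn := hR.dotProduct_mulVec_nonneg q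
  rw [Complex.le_def] at hRnn
  set a : ℝ := (star q ⬝ᵥ (cm α *ᵥ q)).re with ha_def
  set r : ℝ := (star q ⬝ᵥ (cm R *ᵥ q)).re with hr_def
  set e : ℝ := (star q ⬝ᵥ (cm η *ᵥ q)).re with he_def
  have hAeq : star q ⬝ᵥ (cm α *ᵥ q) = (a : ℂ) := by
    apply Complex.ext <;> simp [ha_def, ← hApos.2]
  have hReq : star q ⬝ᵥ (cm R *ᵥ q) = (r : ℂ) := by
    apply Complex.ext <;> simp [hr_def, ← hRnn.2]
  have hEeq : star q ⬝ᵥ (cm η *ᵥ q) = (e : ℂ) := by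
    apply Complex.ext <;> simp [he_def, ← hEnn.2]
  have ha : 0 < a := by simpa using hApos.1
  have hrnn : 0 ≤ r := by simpa using hRnn.1
  have henn : 0 ≤ e := by simpa using hEnn.1
  rw [hAeq, hReq, hEeq] at hkeyC
  rw [Complex.ext_iff] at hkeyC
  obtain ⟨h1, h2⟩ := hkeyC
  simp [Complex.mul_re, Complex.mul_im, pow_two] at h1 h2
  have hkey : 2 * ζ.im * a + β * r = 0 := by
    rcases mul_eq_zero.1 (show ζ.re * (2 * ζ.im * a + β * r) = 0 by ring_nf; ring_nf at h2; linarith [h2]) with h | h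
    · exact absurd h hζ
    · exact h
  have hx2 : 0 < ζ.re ^ 2 := by positivity
  have hsq : (ζ.re^2 + ζ.im^2) * a = e := by
    nlinarith [h1, mul_eq_zero_of_left hkey ζ.im]
  have habs2 : ‖ζ‖ ^ 2 = ζ.re^2 + ζ.im^2 := by
    rw [Complex.sq_norm, Complex.normSq_apply]; ring
  refine ⟨?_, ?_, ?_, ?_⟩
  · field_simp
    nlinarith [hkey]
  · rw [habs2]; field_simp; linarith [hsq]
  · have h' : ζ.im^2 < ‖ζ‖ ^ 2 := by rw [habs2]; nlinarith
    have h'' : |ζ.im| < ‖ζ‖ :=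
      abs_lt_of_sq_lt_sq (by simpa [sq_abs] using h') (norm_nonneg ζ)
    calc -ζ.im ≤ |ζ.im| := neg_le_abs ζ.im
      _ < ‖ζ‖ := h''
  · -- operator norm bound
    have hSP := sqrtM_props hα.posSemidef.1 hα.posSemidef.eigenvalues_nonneg
    have hTP := sqrtM_props hη.1 hη.eigenvalues_nonneg
    set S := ((hα.posSemidef.1.eigenvectorUnitary : Matrix (Fin N) (Fin N) ℂ) *
      diagonal ((↑) ∘ Real.sqrt ∘ hα.posSemidef.1.eigenvalues) *
      (star hα.posSemidef.1.eigenvectorUnitary : Matrix (Fin N) (Fin N) ℂ)) with hS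
    set T := ((hη.1.eigenvectorUnitary : Matrix (Fin N) (Fin N) ℂ) *
      diagonal ((↑) ∘ Real.sqrt ∘ hη.1.eigenvalues) *
      (star hη.1.eigenvectorUnitary : Matrix (Fin N) (Fin N) ℂ)) with hT
    have hSH : Sᴴ = S := hSP.1
    have hTH : Tᴴ = T := hTP.1
    have hSS : S * S = cm α := hSP.2
    have hTT : T * T = cm η := hTP.2
    have hdet : IsUnit S.det := by
      have hdd : IsUnit (S.det * S.det) := by
        rw [← det_mul, hSS]; exact hα.det_pos.ne'.isUnit
      exact isUnit_of_mul_isUnit_left hdd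
    have hKS : Kp hα * S = 1 := nonsing_inv_mul S hdet
    set p : Fin N → ℂ := S *ᵥ q with hp
    have hqp : Kp hα *ᵥ p = q := by
      rw [hp, mulVec_mulVec, hKS, one_mulVec]
    have hap : star p ⬝ᵥ p = star q ⬝ᵥ (cm α *ᵥ q) := by
      rw [hp, star_mulVec, dotProduct_mulVec, vecMul_vecMul, hSH, hSS, ← dotProduct_mulVec]
    have hep : star (T *ᵥ q) ⬝ᵥ (T *ᵥ q) = star q ⬝ᵥ (cm η *ᵥ q) := by
      rw [star_mulVec, dotProduct_mulVec, vecMul_vecMul, hTH, hTT, ← dotProduct_mulVec]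
    have hPhip : Phi hα hη *ᵥ p = T *ᵥ q := by
      rw [Phi, ← mulVec_mulVec, hqp]
    set z : (Fin N ⊕ Fin N) → ℂ := Sum.elim p 0 with hz
    have hOm : Om 0 hα hη *ᵥ z = Sum.elim (0 : Fin N → ℂ) (Complex.I • (T *ᵥ q)) := by
      rw [Om, hz, fromBlocks_mulVec]
      simp [Omp, hcm0, Matrix.smul_mulVec, hPhip]
    have hωnn : 0 ≤ omegaMax 0 hα hη := norm_nonneg _
    have hnormz : ‖(WithLp.equiv 2 ((Fin N ⊕ Fin N) → ℂ)).symm z‖ ^ 2 = a := by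
      rw [normsq_eq', hz, star_sum_elim, sumElim_dotProduct_sumElim, hap]
      simp [ha_def]
    have hnormOz : ‖(WithLp.equiv 2 ((Fin N ⊕ Fin N) → ℂ)).symm (Om 0 hα hη *ᵥ z)‖ ^ 2 = e := by
      rw [normsq_eq', hOm, star_sum_elim, sumElim_dotProduct_sumElim]
      have : star (Complex.I • (T *ᵥ q)) ⬝ᵥ (Complex.I • (T *ᵥ q))
          = star (T *ᵥ q) ⬝ᵥ (T *ᵥ q) := by
        rw [star_smul, smul_dotProduct, dotProduct_smul]
        simp [smul_smul, Complex.ext_iff]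
      rw [this, hep]
      simp [he_def]
    have hle : ‖(WithLp.equiv 2 ((Fin N ⊕ Fin N) → ℂ)).symm (Om 0 hα hη *ᵥ z)‖
        ≤ omegaMax 0 hα hη * ‖(WithLp.equiv 2 ((Fin N ⊕ Fin N) → ℂ)).symm z‖ := by
      have := (Matrix.toEuclideanCLM (𝕜 := ℂ) (Om 0 hα hη)).le_opNorm
        ((WithLp.equiv 2 ((Fin N ⊕ Fin N) → ℂ)).symm z)
      simp only [WithLp.equiv_symm_apply, Matrix.toEuclideanCLM_toLp] at this ⊢
      exact this
    have hea : e ≤ omegaMax 0 hα hη ^ 2 * a := by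
      nlinarith [hle, norm_nonneg ((WithLp.equiv 2 ((Fin N ⊕ Fin N) → ℂ)).symm (Om 0 hα hη *ᵥ z)),
        norm_nonneg ((WithLp.equiv 2 ((Fin N ⊕ Fin N) → ℂ)).symm z), hnormz, hnormOz, hωnn]
    have habs_le : ‖ζ‖ ^ 2 ≤ omegaMax 0 hα hη ^ 2 := by
      rw [habs2]
      rw [← hsq] at hea
      have := (mul_le_mul_iff_of_pos_right ha).1 (by linarith [hea] : (ζ.re^2 + ζ.im^2) * a ≤ omegaMax 0 hα hη ^2 * a)
      exact this
    calc ‖ζ‖ = Real.sqrt (‖ζ‖ ^ 2) := by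
          rw [Real.sqrt_sq (norm_nonneg ζ)]
      _ ≤ Real.sqrt (omegaMax 0 hα hη ^ 2) := Real.sqrt_le_sqrt habs_le
      _ = omegaMax 0 hα hη := Real.sqrt_sq hωnn
end
end

section
/- (Dimension of the kernel of the reduced frequency operator) Assume θ = 0 and the nondegeneracy condition ker η ∩ ker R = {0} (kernels taken in ℂ^N). Let Ω₁ denote the restriction of Ω to the no-loss subspace ker B, compressed by the orthogonal projection onto ker B; since B is Hermitian, its kernel equals { w ∈ ℂ^{2N} : Bw = 0 ∧ Ωw ∈ range B }. Then dim_ℂ { w ∈ ℂ^{2N} : Bw = 0 and Ωw ∈ range B } = N_R, where N_R = rank R = rank B. (Equivalently, dim ker Ω₁ = N_R.) -/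
open Matrix
open scoped ComplexOrder

noncomputable section

variable {N : ℕ}

/- AUX LEMMAS -/

section AuxLemmas

variable {N : ℕ}

/-- The positive semidefinite square root, in the eigenvector form used by `Kp` and `Phi`. -/
def Matrix.PosSemidef.sqrt {A : Matrix (Fin N) (Fin N) ℂ} (hA : A.PosSemidef) :
    Matrix (Fin N) (Fin N) ℂ :=
  (hA.1.eigenvectorUnitary : Matrix (Fin N) (Fin N) ℂ) *
    diagonal ((↑) ∘ Real.sqrt ∘ hA.1.eigenvalues) *
    (star hA.1.eigenvectorUnitary : Matrix (Fin N) (Fin N) ℂ)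

open scoped MatrixOrder in
lemma Matrix.PosSemidef.sqrt_eq_cfcSqrt {A : Matrix (Fin N) (Fin N) ℂ} (hA : A.PosSemidef) :
    hA.sqrt = CFC.sqrt A := by
  rw [CFC.sqrt_eq_real_sqrt A hA.nonneg, cfcₙ_eq_cfc (hf0 := Real.sqrt_zero), hA.1.cfc_eq]
  simp [Matrix.PosSemidef.sqrt, IsHermitian.cfc, Unitary.conjStarAlgAut_apply]

open scoped MatrixOrder in
lemma Matrix.PosSemidef.sqrt_mul_self {A : Matrix (Fin N) (Fin N) ℂ} (hA : A.PosSemidef) :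
    hA.sqrt * hA.sqrt = A := by
  rw [hA.sqrt_eq_cfcSqrt]
  exact CFC.sqrt_mul_sqrt_self A hA.nonneg

open scoped MatrixOrder in
lemma Matrix.PosSemidef.sqrt_transpose_eq {A : Matrix (Fin N) (Fin N) ℂ} (hA : A.PosSemidef)
    (hT : Aᵀ = A) : hA.sqrtᵀ = hA.sqrt := by
  rw [hA.sqrt_eq_cfcSqrt]
  have h0 : (CFC.sqrt A).PosSemidef := (CFC.sqrt_nonneg A).posSemidef
  refine (CFC.sqrt_unique ?_ (posSemidef_transpose_iff.2 h0).nonneg).symm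
  rw [← transpose_mul, CFC.sqrt_mul_sqrt_self A hA.nonneg, hT]

lemma finrank_comap_eq' {V W : Type*} [AddCommGroup V] [Module ℂ V] [AddCommGroup W] [Module ℂ W]
    [FiniteDimensional ℂ V] [FiniteDimensional ℂ W]
    (f : V →ₗ[ℂ] W) (U : Submodule ℂ W) :
    Module.finrank ℂ (U.comap f) =
      Module.finrank ℂ (LinearMap.ker f) +
        Module.finrank ℂ ↥(U ⊓ LinearMap.range f) := by
  classical
  have hmaps : ∀ x ∈ U.comap f, f x ∈ U ⊓ LinearMap.range f := by
    intro x hx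
    exact ⟨hx, ⟨x, rfl⟩⟩
  set g : ↥(U.comap f) →ₗ[ℂ] ↥(U ⊓ LinearMap.range f) := f.restrict hmaps with hg
  have hsurj : Function.Surjective g := by
    rintro ⟨u, huU, x, rfl⟩
    exact ⟨⟨x, huU⟩, rfl⟩
  have hker : LinearMap.ker g = (LinearMap.ker f).comap (U.comap f).subtype := by
    ext ⟨x, hx⟩
    simp [hg, LinearMap.restrict_apply, Subtype.ext_iff]
  have hle : LinearMap.ker f ≤ U.comap f := by
    intro x hx
    simp only [LinearMap.mem_ker] at hx
    simp [Submodule.mem_comap, hx]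
  have e1 : Module.finrank ℂ (LinearMap.ker g) = Module.finrank ℂ (LinearMap.ker f) := by
    rw [hker]
    exact (Submodule.comapSubtypeEquivOfLe hle).finrank_eq
  have e2 := g.finrank_range_add_finrank_ker
  rw [LinearMap.range_eq_top.2 hsurj, finrank_top, e1] at e2
  omega

def cvf {N : ℕ} (u : Fin N → ℝ) : Fin N → ℂ := fun j => (u j : ℂ)

lemma cm_mulVec_cvf (M : Matrix (Fin N) (Fin N) ℝ) (u : Fin N → ℝ) :
    cm M *ᵥ cvf u = cvf (M *ᵥ u) := by
  ext i
  simp [cm, cvf, mulVec, dotProduct]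

lemma re_of_cmMulVec {M : Matrix (Fin N) (Fin N) ℝ} {x : Fin N → ℂ}
    (h : cm M *ᵥ x = 0) : M *ᵥ (fun j => (x j).re) = 0 ∧ M *ᵥ (fun j => (x j).im) = 0 := by
  constructor <;>
  · ext i
    have h1 := congrArg Complex.re (congrFun h i)
    have h2 := congrArg Complex.im (congrFun h i)
    simp only [mulVec, dotProduct, cm, map_apply, Pi.zero_apply] at h1 h2 ⊢
    simp only [Complex.re_sum, Complex.im_sum, Complex.zero_re, Complex.zero_im,
      Complex.mul_re, Complex.mul_im, Complex.ofReal_re, Complex.ofReal_im,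
      zero_mul, sub_zero, zero_add, mul_zero, add_zero] at h1 h2
    first
      | exact h1
      | exact h2

lemma finrank_ker_cm (M : Matrix (Fin N) (Fin N) ℝ) :
    Module.finrank ℂ (LinearMap.ker (cm M).mulVecLin) =
      Module.finrank ℝ (LinearMap.ker M.mulVecLin) := by
  classical
  set p := LinearMap.ker M.mulVecLin with hp
  set q := LinearMap.ker (cm M).mulVecLin with hq
  set k := Module.finrank ℝ p with hk
  let b : Module.Basis (Fin k) ℝ p := Module.finBasis ℝ p
  set bv : Fin k → (Fin N → ℝ) := fun i => (b i : Fin N → ℝ) with hbv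
  have hbvp : ∀ i, bv i ∈ p := fun i => (b i).2
  set v : Fin k → (Fin N → ℂ) := fun i => cvf (bv i) with hv
  have hvq : ∀ i, v i ∈ q := by
    intro i
    have : M *ᵥ bv i = 0 := hbvp i
    simp only [hq, LinearMap.mem_ker, mulVecLin_apply, hv, cm_mulVec_cvf, this]
    ext j; simp [cvf]
  have hbvindep : LinearIndependent ℝ bv := by
    have := b.linearIndependent
    exact this.map' p.subtype (Submodule.ker_subtype p)
  have hindep : LinearIndependent ℂ v := by
    rw [Fintype.linearIndependent_iff]
    intro g hg i
    have hre : ∀ j, (∑ i, g i • v i) j = 0 := fun j => by rw [hg]; rfl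
    have hsumre : ∑ i', (g i').re • bv i' = (0 : Fin N → ℝ) := by
      ext j
      have := hre j
      simp only [Finset.sum_apply, Pi.smul_apply, smul_eq_mul, hv, cvf] at this
      have := congrArg Complex.re this
      simpa [Complex.re_sum, Complex.mul_re] using this
    have hsumim : ∑ i', (g i').im • bv i' = (0 : Fin N → ℝ) := by
      ext j
      have := hre j
      simp only [Finset.sum_apply, Pi.smul_apply, smul_eq_mul, hv, cvf] at this
      have := congrArg Complex.im this
      simpa [Complex.im_sum, Complex.mul_im] using this
    have h1 := Fintype.linearIndependent_iff.1 hbvindep _ hsumre i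
    have h2 := Fintype.linearIndependent_iff.1 hbvindep _ hsumim i
    exact Complex.ext h1 h2
  have hcvf_span : ∀ u ∈ p, cvf u ∈ Submodule.span ℂ (Set.range v) := by
    intro u hu
    have hspan : u ∈ Submodule.span ℝ (Set.range bv) := by
      have : Submodule.map p.subtype (Submodule.span ℝ (Set.range b)) =
          Submodule.span ℝ (Set.range bv) := by
        rw [Submodule.map_span]
        congr 1
        ext w
        simp [hbv, Set.range_comp]
      rw [← this, b.span_eq]
      exact ⟨⟨u, hu⟩, trivial, rfl⟩
    refine Submodule.span_induction ?_ ?_ ?_ ?_ hspan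
    · rintro _ ⟨i, rfl⟩
      exact Submodule.subset_span ⟨i, rfl⟩
    · have : cvf (0 : Fin N → ℝ) = 0 := by ext j; simp [cvf]
      rw [this]; exact Submodule.zero_mem _
    · intro a c _ _ ha hc
      have : cvf (a + c) = cvf a + cvf c := by ext j; simp [cvf]
      rw [this]; exact Submodule.add_mem _ ha hc
    · intro r a _ ha
      have : cvf (r • a) = (r : ℂ) • cvf a := by ext j; simp [cvf]
      rw [this]; exact Submodule.smul_mem _ _ ha
  have hspan : Submodule.span ℂ (Set.range v) = q := by
    apply le_antisymm
    · rw [Submodule.span_le]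
      rintro _ ⟨i, rfl⟩
      exact hvq i
    · intro x hx
      have hx0 : cm M *ᵥ x = 0 := hx
      obtain ⟨hre, him⟩ := re_of_cmMulVec hx0
      have hxeq : x = cvf (fun j => (x j).re) + Complex.I • cvf (fun j => (x j).im) := by
        ext j
        simp [cvf, Complex.ext_iff]
      rw [hxeq]
      exact Submodule.add_mem _ (hcvf_span _ hre) (Submodule.smul_mem _ _ (hcvf_span _ him))
  set v' : Fin k → q := fun i => ⟨v i, hvq i⟩ with hv'
  have hindep' : LinearIndependent ℂ v' := LinearIndependent.of_comp q.subtype hindep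
  have hspan' : Submodule.span ℂ (Set.range v') = ⊤ := by
    apply Submodule.map_injective_of_injective q.injective_subtype
    rw [Submodule.map_span, Submodule.map_top, Submodule.range_subtype]
    have himg : ⇑q.subtype '' Set.range v' = Set.range v := by
      ext w
      simp [hv']
    rw [himg, hspan]
  let B : Module.Basis (Fin k) ℂ q := Module.Basis.mk hindep' hspan'.ge
  rw [Module.finrank_eq_card_basis B, Fintype.card_fin]

lemma rank_cm (M : Matrix (Fin N) (Fin N) ℝ) : (cm M).rank = M.rank := by
  have h1 := (cm M).mulVecLin.finrank_range_add_finrank_ker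
  have h2 := M.mulVecLin.finrank_range_add_finrank_ker
  have e1 : (cm M).rank = Module.finrank ℂ (LinearMap.range (cm M).mulVecLin) := rfl
  have e2 : M.rank = Module.finrank ℝ (LinearMap.range M.mulVecLin) := rfl
  have e3 := finrank_ker_cm M
  have f1 : Module.finrank ℂ (Fin N → ℂ) = N := by simp
  have f2 : Module.finrank ℝ (Fin N → ℝ) = N := by simp
  rw [f1] at h1
  rw [f2] at h2
  omega

lemma range_fromColumns_eq (A B : Matrix (Fin N) (Fin N) ℂ) :
    LinearMap.range (fromCols A B).mulVecLin =
      LinearMap.range A.mulVecLin ⊔ LinearMap.range B.mulVecLin := by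
  apply le_antisymm
  · rintro _ ⟨w, rfl⟩
    have hw : (fromCols A B).mulVecLin w = A *ᵥ (w ∘ Sum.inl) + B *ᵥ (w ∘ Sum.inr) := by
      conv_lhs => rw [mulVecLin_apply, ← Sum.elim_comp_inl_inr w]
      rw [fromCols_mulVec_sumElim]
    rw [hw]
    exact Submodule.add_mem_sup ⟨_, rfl⟩ ⟨_, rfl⟩
  · rw [sup_le_iff]
    constructor <;> rintro _ ⟨u, rfl⟩
    · exact ⟨Sum.elim u 0, by simp⟩
    · exact ⟨Sum.elim 0 u, by simp⟩

lemma sup_range_eq_top (A B : Matrix (Fin N) (Fin N) ℂ)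
    (h : ∀ x, Aᵀ *ᵥ x = 0 → Bᵀ *ᵥ x = 0 → x = 0) :
    LinearMap.range A.mulVecLin ⊔ LinearMap.range B.mulVecLin = ⊤ := by
  set C := fromCols A B with hC
  have hker : LinearMap.ker Cᵀ.mulVecLin = ⊥ := by
    rw [LinearMap.ker_eq_bot']
    intro x hx
    rw [hC, transpose_fromCols, mulVecLin_apply, fromRows_mulVec] at hx
    have h1 : Aᵀ *ᵥ x = 0 := funext fun i => congrFun hx (Sum.inl i)
    have h2 : Bᵀ *ᵥ x = 0 := funext fun i => congrFun hx (Sum.inr i)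
    exact h x h1 h2
  have hrankt : Cᵀ.rank = N := by
    have h5 := Cᵀ.mulVecLin.finrank_range_add_finrank_ker
    rw [hker, finrank_bot] at h5
    have hfr : Module.finrank ℂ (Fin N → ℂ) = N := by simp
    have h6 : Cᵀ.rank = Module.finrank ℂ (LinearMap.range Cᵀ.mulVecLin) := rfl
    omega
  have hrank : C.rank = N := by rw [← C.rank_transpose, hrankt]
  have hfin : Module.finrank ℂ
      ↥(LinearMap.range A.mulVecLin ⊔ LinearMap.range B.mulVecLin) = N := by
    rw [← range_fromColumns_eq]
    exact hrank
  apply Submodule.eq_top_of_finrank_eq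
  rw [hfin]; simp

/-- Extension by zero on the left component. -/
def sumElimR (N : ℕ) : (Fin N → ℂ) →ₗ[ℂ] (Fin N ⊕ Fin N → ℂ) where
  toFun y := Sum.elim 0 y
  map_add' u v := by funext i; cases i <;> simp
  map_smul' c v := by funext i; cases i <;> simp

/-- Extension by zero on the right component. -/
def sumElimL (N : ℕ) : (Fin N → ℂ) →ₗ[ℂ] (Fin N ⊕ Fin N → ℂ) where
  toFun y := Sum.elim y 0
  map_add' u v := by funext i; cases i <;> simp
  map_smul' c v := by funext i; cases i <;> simp

lemma sumElimR_injective (N : ℕ) : Function.Injective (sumElimR N) := by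
  intro u v h
  funext i
  exact congrFun h (Sum.inr i)

lemma sumElimL_injective (N : ℕ) : Function.Injective (sumElimL N) := by
  intro u v h
  funext i
  exact congrFun h (Sum.inl i)

end AuxLemmas


/-- **Dimension of the kernel of the reduced frequency operator** (`θ = 0`, nondegeneracy
`ker η ∩ ker R = {0}`). The kernel of `Ω₁` — identified with
`{w : Bw = 0 ∧ Ωw ∈ range B}` — has dimension `N_R = rank R = rank B`. -/
theorem kernel_dimension_reduced_operator
    {N : ℕ} (hN : 1 ≤ N)
    (α η R : Matrix (Fin N) (Fin N) ℝ)
    (hα : (cm α).PosDef) (hη : (cm η).PosSemidef)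
    (hR : (cm R).PosSemidef) (hR0 : R ≠ 0)
    (hnd : ∀ x : Fin N → ℂ, cm η *ᵥ x = 0 → cm R *ᵥ x = 0 → x = 0) :
    Module.finrank ℂ
        ↥(LinearMap.ker (Bm R hα).mulVecLin ⊓
          Submodule.comap (Om 0 hα hη).mulVecLin (LinearMap.range (Bm R hα).mulVecLin)) =
      R.rank ∧
    (Bm R hα).rank = R.rank := by
  classical
  have cm_transp : ∀ (M : Matrix (Fin N) (Fin N) ℝ), (cm M).IsHermitian → (cm M)ᵀ = cm M := by
    intro M hM
    have : (cm M)ᴴ = (cm M)ᵀ := by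
      ext i j
      simp [cm, conjTranspose_apply, Complex.conj_ofReal]
    rw [← this, hM]
  have hαT : (cm α)ᵀ = cm α := cm_transp α hα.1
  have hηT : (cm η)ᵀ = cm η := cm_transp η hη.1
  have hRT : (cm R)ᵀ = cm R := cm_transp R hR.1
  set S := hα.posSemidef.sqrt with hSdef
  set Sη := hη.sqrt with hSηdef
  have hST : Sᵀ = S := by
    exact hα.posSemidef.sqrt_transpose_eq hαT
  have hSηT : Sηᵀ = Sη := by
    exact hη.sqrt_transpose_eq hηT
  set K := Kp hα with hKdef
  have hKT : Kᵀ = K := by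
    rw [hKdef, Kp, transpose_nonsing_inv]
    rw [hKdef, Kp] at *
    exact congrArg Inv.inv hST
  have hdetα : IsUnit (cm α).det := (isUnit_iff_isUnit_det _).1 hα.isUnit
  have hdetS : IsUnit S.det := by
    have h : S.det * S.det = (cm α).det := by
      rw [← det_mul, hα.posSemidef.sqrt_mul_self]
    exact isUnit_of_mul_isUnit_left (h ▸ hdetα)
  have hdetK : IsUnit K.det := by
    rw [hKdef, Kp]
    exact S.isUnit_nonsing_inv_det hdetS
  have hKinj : Function.Injective K.mulVec :=
    mulVec_injective_iff_isUnit.2 ((isUnit_iff_isUnit_det K).2 hdetK)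
  -- Phi and Rt as products
  have hPhi : Phi hα hη = Sη * K := rfl
  have hRt : Rt R hα = K * cm R * K := rfl
  have hPhiT : (Phi hα hη)ᵀ = K * Sη := by
    rw [hPhi, transpose_mul, hKT, hSηT]
  have hRtT : (Rt R hα)ᵀ = Rt R hα := by
    rw [hRt, transpose_mul, transpose_mul, hKT, hRT]
    rw [Matrix.mul_assoc]
  -- nondegeneracy on the reduced level
  have hker1 : ∀ x, Phi hα hη *ᵥ x = 0 → Rt R hα *ᵥ x = 0 → x = 0 := by
    intro x h1 h2
    have hy1 : cm η *ᵥ (K *ᵥ x) = 0 := by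
      have hs : Sη *ᵥ (K *ᵥ x) = 0 := by
        rw [mulVec_mulVec]
        exact h1
      rw [← hη.sqrt_mul_self, ← hSηdef, ← mulVec_mulVec, hs, mulVec_zero]
    have hy2 : cm R *ᵥ (K *ᵥ x) = 0 := by
      have h3 : K *ᵥ (cm R *ᵥ (K *ᵥ x)) = 0 := by
        rw [mulVec_mulVec, mulVec_mulVec]
        exact h2
      exact hKinj (h3.trans (mulVec_zero K).symm)
    have h4 := hnd _ hy1 hy2
    exact hKinj (h4.trans (mulVec_zero K).symm)
  -- the key surjectivity
  have hsup : LinearMap.range (K * Sη).mulVecLin ⊔ LinearMap.range (Rt R hα).mulVecLin = ⊤ := by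
    apply sup_range_eq_top
    intro x h1 h2
    have hKSηT : (K * Sη)ᵀ = Phi hα hη := by
      rw [transpose_mul, hKT, hSηT, hPhi]
    refine hker1 x ?_ ?_
    · rwa [hKSηT] at h1
    · rwa [hRtT] at h2
  -- Om with θ = 0
  have hOm0 : Om 0 hα hη =
      fromBlocks 0 ((-Complex.I) • (Phi hα hη)ᵀ) (Complex.I • Phi hα hη) 0 := by
    have hcm0 : cm (0 : Matrix (Fin N) (Fin N) ℝ) = 0 := by
      ext i j; simp [cm]
    rw [Om, Omp, hcm0]
    simp
  -- the subspace W
  set f : (Fin N → ℂ) →ₗ[ℂ] (Fin N → ℂ) := (K * Sη).mulVecLin with hfdef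
  set U : Submodule ℂ (Fin N → ℂ) := LinearMap.range (Rt R hα).mulVecLin with hUdef
  set W : Submodule ℂ (Fin N → ℂ) := U.comap f with hWdef
  -- identification of the kernel subspace
  have hT : LinearMap.ker (Bm R hα).mulVecLin ⊓
      Submodule.comap (Om 0 hα hη).mulVecLin (LinearMap.range (Bm R hα).mulVecLin) =
      Submodule.map (sumElimR N) W := by
    ext w
    simp only [Submodule.mem_inf, LinearMap.mem_ker, Submodule.mem_comap, LinearMap.mem_range,
      mulVecLin_apply, Submodule.mem_map, hWdef, hUdef, hfdef]
    constructor
    · rintro ⟨hB, u, hu⟩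
      rw [Bm, fromBlocks_mulVec] at hB hu
      rw [hOm0, fromBlocks_mulVec] at hu
      simp only [zero_mulVec, add_zero, zero_add, Matrix.smul_mulVec] at hB hu
      have hB1 : Rt R hα *ᵥ (w ∘ Sum.inl) = 0 := funext fun i => congrFun hB (Sum.inl i)
      have hu1 : Rt R hα *ᵥ (u ∘ Sum.inl) = -Complex.I • ((Phi hα hη)ᵀ *ᵥ (w ∘ Sum.inr)) :=
        funext fun i => congrFun hu (Sum.inl i)
      have hu2 : (0 : Fin N → ℂ) = Complex.I • (Phi hα hη *ᵥ (w ∘ Sum.inl)) :=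
        funext fun i => congrFun hu (Sum.inr i)
      have hΦ : Phi hα hη *ᵥ (w ∘ Sum.inl) = 0 := by
        rcases smul_eq_zero.1 hu2.symm with h | h
        · exact absurd h Complex.I_ne_zero
        · exact h
      have hx0 : w ∘ Sum.inl = 0 := hker1 _ hΦ hB1
      refine ⟨w ∘ Sum.inr, ⟨Complex.I • (u ∘ Sum.inl), ?_⟩, ?_⟩
      · rw [mulVec_smul, hu1, smul_smul, ← hPhiT]
        rw [show Complex.I * -Complex.I = 1 by
          rw [mul_neg, Complex.I_mul_I, neg_neg], one_smul]
      · show Sum.elim (0 : Fin N → ℂ) (w ∘ Sum.inr) = w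
        conv_rhs => rw [← Sum.elim_comp_inl_inr w, hx0]
    · rintro ⟨y, ⟨z, hz⟩, rfl⟩
      have helim : (sumElimR N) y = Sum.elim (0 : Fin N → ℂ) y := rfl
      constructor
      · rw [helim, Bm, fromBlocks_mulVec]
        funext i
        cases i <;> simp
      · refine ⟨Sum.elim (-Complex.I • z) (0 : Fin N → ℂ), ?_⟩
        rw [helim, Bm, hOm0, fromBlocks_mulVec, fromBlocks_mulVec]
        funext i
        cases i with
        | inl i =>
          simp only [Sum.elim_comp_inl, Sum.elim_comp_inr, Sum.elim_inl, zero_mulVec, add_zero,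
            mulVec_zero, zero_add, Matrix.smul_mulVec, mulVec_smul]
          rw [hz, hPhiT]
        | inr i =>
          simp [Matrix.smul_mulVec]
  -- rank identities
  have hrankRt : (Rt R hα).rank = R.rank := by
    rw [hRt, rank_mul_eq_left_of_isUnit_det _ _ hdetK,
      rank_mul_eq_right_of_isUnit_det _ _ hdetK, rank_cm]
  have hrankBm : (Bm R hα).rank = (Rt R hα).rank := by
    have hrange : LinearMap.range (Bm R hα).mulVecLin =
        Submodule.map (sumElimL N) (LinearMap.range (Rt R hα).mulVecLin) := by
      apply le_antisymm
      · rintro _ ⟨w, rfl⟩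
        refine ⟨Rt R hα *ᵥ (w ∘ Sum.inl), ⟨w ∘ Sum.inl, rfl⟩, ?_⟩
        show Sum.elim (Rt R hα *ᵥ (w ∘ Sum.inl)) (0 : Fin N → ℂ) = (Bm R hα).mulVecLin w
        rw [mulVecLin_apply, Bm, fromBlocks_mulVec]
        funext i
        cases i <;> simp [sumElimL]
      · rintro _ ⟨_, ⟨u, rfl⟩, rfl⟩
        refine ⟨Sum.elim u (0 : Fin N → ℂ), ?_⟩
        rw [mulVecLin_apply, Bm, fromBlocks_mulVec]
        funext i
        cases i <;> simp [sumElimL]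
    have e1 : (Bm R hα).rank = Module.finrank ℂ (LinearMap.range (Bm R hα).mulVecLin) := rfl
    have e2 : (Rt R hα).rank = Module.finrank ℂ (LinearMap.range (Rt R hα).mulVecLin) := rfl
    rw [e1, e2, hrange]
    exact (Submodule.equivMapOfInjective _ (sumElimL_injective N) _).finrank_eq.symm
  refine ⟨?_, hrankBm.trans hrankRt⟩
  -- dimension count
  rw [hT]
  have e0 : Module.finrank ℂ ↥(Submodule.map (sumElimR N) W) = Module.finrank ℂ W :=
    (Submodule.equivMapOfInjective _ (sumElimR_injective N) _).finrank_eq.symm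
  rw [e0, hWdef, finrank_comap_eq' f U]
  have hrn := f.finrank_range_add_finrank_ker
  have hfr : Module.finrank ℂ (Fin N → ℂ) = N := by simp
  rw [hfr] at hrn
  have hsupinf := Submodule.finrank_sup_add_finrank_inf_eq U (LinearMap.range f)
  rw [sup_comm, hsup] at hsupinf
  rw [finrank_top, hfr] at hsupinf
  have hU : Module.finrank ℂ U = R.rank := by
    rw [hUdef, ← hrankRt]
    rfl
  omega
end
end
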